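/- For a rank-2 matroid M, the graph G_M whose vertices are elements of the ground set and whose edges are the bases of M is a complete multipartite graph plus isolated vertices; consequently the second eigenvalue of the simple random walk on G_M is at most 0, i.e., γ(Q_M) ≥ 1. -/
import Mathlib

open Finset
open scoped Classical

private noncomputable def nbr {E : Type*} [Fintype E] [DecidableEq E] (Ind : Finset E → Prop) (a : E) :
    Finset E := univ.filter (fun c => c ≠ a ∧ Ind {a, c})

private noncomputable def NLs {E : Type*} [Fintype E] [DecidableEq E] (Ind : Finset E → Prop) :
    Finset E := univ.filter (fun a => Ind {a})

private noncomputable def par {E : Type*} [Fintype E] [DecidableEq E] (Ind : Finset E → Prop) (a : E) :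
    Finset E := (NLs Ind).filter (fun c => ¬(c ≠ a ∧ Ind {a, c}))

theorem rank_two_matroid_local_walk (E : Type*) [Fintype E] [DecidableEq E]
    (Ind : Finset E → Prop)
    (hempty : Ind ∅)
    (hdown : ∀ S T : Finset E, T ⊆ S → Ind S → Ind T)
    (hexch : ∀ S T : Finset E, Ind S → Ind T → S.card < T.card →
      ∃ e ∈ T \ S, Ind (insert e S))
    (hrank : ∀ S : Finset E, Ind S → S.card ≤ 2)
    (hbasis : ∃ B : Finset E, Ind B ∧ B.card = 2)
    (Q : Matrix E E ℝ)
    (hQ : ∀ a b : E, Q a b = if a ≠ b ∧ Ind {a, b} then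
        ((univ.filter (fun c => c ≠ a ∧ Ind {a, c})).card : ℝ)⁻¹ else 0) :
    (∀ i j k : E, Ind {i} → Ind {j, k} → j ≠ k → i ≠ j → i ≠ k →
        Ind {i, j} ∨ Ind {i, k}) ∧
    (∀ (t : ℝ) (v : E → ℝ), v ≠ 0 → Q.mulVec v = t • v → t = 1 ∨ t ≤ 0) := by
  have hsym : ∀ a b : E, Ind {a, b} → Ind {b, a} := fun a b h => by
    rwa [Finset.pair_comm] at h
  have part1 : ∀ i j k : E, Ind {i} → Ind {j, k} → j ≠ k → i ≠ j → i ≠ k →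
      Ind {i, j} ∨ Ind {i, k} := by
    intro i j k hi hjk hjk' hij hik
    have hcard : ({i} : Finset E).card < ({j, k} : Finset E).card := by
      rw [Finset.card_singleton, Finset.card_pair hjk']; norm_num
    obtain ⟨e, he, hei⟩ := hexch {i} {j, k} hi hjk hcard
    have hie : Ind {i, e} := hsym e i hei
    rcases Finset.mem_sdiff.mp he with ⟨h1, -⟩
    rcases Finset.mem_insert.mp h1 with rfl | h2
    · exact Or.inl hie
    · rcases Finset.mem_singleton.mp h2 with rfl
      exact Or.inr hie
  refine ⟨part1, ?_⟩
  intro t v hv hEig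
  by_contra hcon
  push_neg at hcon
  obtain ⟨ht1, ht0⟩ := hcon
  have htne : t ≠ 0 := ne_of_gt ht0
  have hmem_nbr : ∀ a c : E, c ∈ nbr Ind a ↔ (c ≠ a ∧ Ind {a, c}) := by
    intro a c; simp only [nbr, Finset.mem_filter, Finset.mem_univ, true_and]
  have hmem_N : ∀ a : E, a ∈ NLs Ind ↔ Ind {a} := by intro a; simp [NLs]
  have hmem_par : ∀ a c : E, c ∈ par Ind a ↔ (Ind {c} ∧ ¬(c ≠ a ∧ Ind {a, c})) := by
    intro a c
    simp only [par, NLs, Finset.mem_filter, Finset.mem_univ, true_and]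
  have hpair_nl : ∀ a c : E, Ind {a, c} → Ind {c} :=
    fun a c h => hdown {a, c} {c} (by simp) h
  have hnbrN : ∀ a : E, nbr Ind a = (NLs Ind).filter (fun c => c ≠ a ∧ Ind {a, c}) := by
    intro a; ext c
    simp only [hmem_nbr, Finset.mem_filter, hmem_N]
    exact ⟨fun h => ⟨hpair_nl a c h.2, h⟩, fun h => h.2⟩
  have hparN : ∀ a : E, par Ind a = (NLs Ind).filter (fun c => ¬(c ≠ a ∧ Ind {a, c})) := by
    intro a; ext c
    rw [hmem_par, Finset.mem_filter, hmem_N]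
  have hsplit : ∀ a : E, (nbr Ind a).card + (par Ind a).card = (NLs Ind).card := by
    intro a
    rw [hnbrN, hparN]
    exact Finset.card_filter_add_card_filter_not _
  -- row formula
  have hrow : ∀ a : E, Q.mulVec v a = ((nbr Ind a).card : ℝ)⁻¹ * ∑ b ∈ nbr Ind a, v b := by
    intro a
    have hseteq : univ.filter (fun c => c ≠ a ∧ Ind {a, c}) = nbr Ind a := by
      ext c
      rw [hmem_nbr, Finset.mem_filter]
      simp
    have hterm : ∀ b : E, Q a b * v b =
        if b ∈ nbr Ind a then ((nbr Ind a).card : ℝ)⁻¹ * v b else 0 := by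
      intro b
      rw [hQ a b]
      by_cases hb : b ∈ nbr Ind a
      · obtain ⟨h1, h2⟩ := (hmem_nbr a b).mp hb
        rw [if_pos ⟨h1.symm, h2⟩, if_pos hb, hseteq]
      · rw [if_neg (fun hh => hb ((hmem_nbr a b).mpr ⟨hh.1.symm, hh.2⟩)), if_neg hb, zero_mul]
    have h0 : Q.mulVec v a = ∑ b, Q a b * v b := by
      simp [Matrix.mulVec, dotProduct]
    rw [h0]
    calc ∑ b, Q a b * v b
        = ∑ b, if b ∈ nbr Ind a then ((nbr Ind a).card : ℝ)⁻¹ * v b else 0 :=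
          Finset.sum_congr rfl (fun b _ => hterm b)
      _ = ∑ b ∈ univ ∩ nbr Ind a, ((nbr Ind a).card : ℝ)⁻¹ * v b :=
          Finset.sum_ite_mem _ _ _
      _ = ∑ b ∈ nbr Ind a, ((nbr Ind a).card : ℝ)⁻¹ * v b := by rw [Finset.univ_inter]
      _ = ((nbr Ind a).card : ℝ)⁻¹ * ∑ b ∈ nbr Ind a, v b := by rw [Finset.mul_sum]
  have hEa : ∀ a : E, t * v a = ((nbr Ind a).card : ℝ)⁻¹ * ∑ b ∈ nbr Ind a, v b := by
    intro a
    rw [← hrow a, hEig]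
    simp
  -- nonloops have a neighbor
  have hd_ne : ∀ a : E, Ind {a} → (nbr Ind a).Nonempty := by
    intro a ha
    obtain ⟨B, hB, hB2⟩ := hbasis
    obtain ⟨j, k, hjk, rfl⟩ := Finset.card_eq_two.mp hB2
    by_cases haj : a = j
    · exact ⟨k, (hmem_nbr a k).mpr ⟨by rw [haj]; exact hjk.symm, by rw [haj]; exact hB⟩⟩
    by_cases hak : a = k
    · exact ⟨j, (hmem_nbr a j).mpr ⟨by rw [hak]; exact hjk,
        by rw [hak]; exact hsym j k hB⟩⟩
    rcases part1 a j k ha hB hjk haj hak with h | h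
    · exact ⟨j, (hmem_nbr a j).mpr ⟨fun hh => haj hh.symm, h⟩⟩
    · exact ⟨k, (hmem_nbr a k).mpr ⟨fun hh => hak hh.symm, h⟩⟩
  have hd_pos : ∀ a : E, Ind {a} → 0 < ((nbr Ind a).card : ℝ) := by
    intro a ha
    exact_mod_cast (hd_ne a ha).card_pos
  -- parallel class structure
  have hmemPP : ∀ a : E, Ind {a} → a ∈ par Ind a := by
    intro a ha
    exact (hmem_par a a).mpr ⟨ha, fun h => h.1 rfl⟩
  have hPsub : ∀ a b : E, Ind {a} → b ∈ par Ind a → par Ind b ⊆ par Ind a := by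
    intro a b ha hb c hc
    obtain ⟨hbnl, hb2⟩ := (hmem_par a b).mp hb
    obtain ⟨hcnl, hc2⟩ := (hmem_par b c).mp hc
    refine (hmem_par a c).mpr ⟨hcnl, fun hh => ?_⟩
    obtain ⟨hca, hac⟩ := hh
    by_cases hba : b = a
    · exact hc2 (by rw [hba]; exact ⟨hca, hac⟩)
    have hnab : ¬ Ind {a, b} := fun h => hb2 ⟨hba, h⟩
    by_cases hcb : c = b
    · exact hnab (hcb ▸ hac)
    have hnbc : ¬ Ind {b, c} := fun h => hc2 ⟨hcb, h⟩
    rcases part1 b a c hbnl hac (fun h => hca h.symm) hba (fun h => hcb h.symm) with h | h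
    · exact hnab (hsym b a h)
    · exact hnbc h
  have hPsymm : ∀ a b : E, Ind {a} → b ∈ par Ind a → a ∈ par Ind b := by
    intro a b ha hb
    obtain ⟨hbnl, hb2⟩ := (hmem_par a b).mp hb
    refine (hmem_par b a).mpr ⟨ha, fun hh => hb2 ⟨fun h => hh.1 h.symm, hsym b a hh.2⟩⟩
  have hPeq : ∀ a b : E, Ind {a} → b ∈ par Ind a → par Ind a = par Ind b := by
    intro a b ha hb
    have hbnl : Ind {b} := ((hmem_par a b).mp hb).1
    exact Finset.Subset.antisymm (hPsub b a hbnl (hPsymm a b ha hb)) (hPsub a b ha hb)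
  -- sum split
  set S : ℝ := ∑ b ∈ NLs Ind, v b with hS
  have hsum_split : ∀ a : E, (∑ b ∈ nbr Ind a, v b) + (∑ b ∈ par Ind a, v b) = S := by
    intro a
    rw [hnbrN, hparN, hS]
    exact Finset.sum_filter_add_sum_filter_not _ _ _
  have hveq : ∀ a : E, Ind {a} →
      t * v a * ((nbr Ind a).card : ℝ) = S - ∑ b ∈ par Ind a, v b := by
    intro a ha
    have h1 := hEa a
    have hd := hd_pos a ha
    have h2 : t * v a * ((nbr Ind a).card : ℝ) = ∑ b ∈ nbr Ind a, v b := by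
      rw [h1]; field_simp
    rw [h2, ← hsum_split a]; ring
  -- v is constant on parallel classes
  have hconst : ∀ a b : E, Ind {a} → b ∈ par Ind a → v b = v a := by
    intro a b ha hb
    have hbnl : Ind {b} := ((hmem_par a b).mp hb).1
    have hpe : par Ind a = par Ind b := hPeq a b ha hb
    have hde : (nbr Ind a).card = (nbr Ind b).card := by
      have h1 := hsplit a
      have h2 := hsplit b
      rw [hpe] at h1
      omega
    have hva := hveq a ha
    have hvb := hveq b hbnl
    rw [← hpe, ← hde, ← hva] at hvb
    have hd := hd_pos a ha
    have h3 : t * v b = t * v a := mul_right_cancel₀ (ne_of_gt hd) hvb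
    exact mul_left_cancel₀ htne h3
  have hsum_par : ∀ a : E, Ind {a} →
      (∑ b ∈ par Ind a, v b) = ((par Ind a).card : ℝ) * v a := by
    intro a ha
    rw [Finset.sum_congr rfl (fun b hb => hconst a b ha hb), Finset.sum_const, nsmul_eq_mul]
  have key : ∀ a : E, Ind {a} →
      v a * (t * ((nbr Ind a).card : ℝ) + ((par Ind a).card : ℝ)) = S := by
    intro a ha
    have h1 := hveq a ha
    rw [hsum_par a ha] at h1
    linear_combination h1
  have hc_pos : ∀ a : E, Ind {a} →
      0 < t * ((nbr Ind a).card : ℝ) + ((par Ind a).card : ℝ) := by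
    intro a ha
    have h1 := hd_pos a ha
    have h2 : (0:ℝ) ≤ ((par Ind a).card : ℝ) := Nat.cast_nonneg _
    nlinarith
  -- loops have v = 0
  have hloop : ∀ a : E, ¬ Ind {a} → v a = 0 := by
    intro a ha
    have hne : nbr Ind a = ∅ := by
      ext c
      simp only [hmem_nbr, Finset.notMem_empty, iff_false, not_and]
      intro _ h
      exact absurd (hdown {a, c} {a} (by simp) h) ha
    have h1 := hEa a
    rw [hne] at h1
    simp at h1
    rcases h1 with h | h
    · exact absurd h htne
    · exact h
  by_cases hS0 : S = 0
  · apply hv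
    funext a
    simp only [Pi.zero_apply]
    by_cases ha : Ind {a}
    · have hk := key a ha
      rw [hS0] at hk
      rcases mul_eq_zero.mp hk with h | h
      · exact h
      · exact absurd h (ne_of_gt (hc_pos a ha))
    · exact hloop a ha
  · have hNne : (NLs Ind).Nonempty := by
      rw [Finset.nonempty_iff_ne_empty]
      intro h
      apply hS0
      rw [hS, h, Finset.sum_empty]
    have hn_pos : (0:ℝ) < ((NLs Ind).card : ℝ) := by exact_mod_cast hNne.card_pos
    have hvval : ∀ a : E, Ind {a} →
        v a = S * (t * ((nbr Ind a).card : ℝ) + ((par Ind a).card : ℝ))⁻¹ := by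
      intro a ha
      have hc := ne_of_gt (hc_pos a ha)
      rw [← key a ha, mul_assoc, mul_inv_cancel₀ hc, mul_one]
    have hsum1 : ∑ a ∈ NLs Ind,
        (t * ((nbr Ind a).card : ℝ) + ((par Ind a).card : ℝ))⁻¹ = 1 := by
      have h1 : S * (∑ a ∈ NLs Ind,
          (t * ((nbr Ind a).card : ℝ) + ((par Ind a).card : ℝ))⁻¹) = S * 1 := by
        rw [mul_one, Finset.mul_sum]
        conv_rhs => rw [hS]
        apply Finset.sum_congr rfl
        intro a haN
        exact (hvval a ((hmem_N a).mp haN)).symm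
      exact mul_left_cancel₀ hS0 h1
    have hdp : ∀ a : E, ((nbr Ind a).card : ℝ) + ((par Ind a).card : ℝ) =
        ((NLs Ind).card : ℝ) := by
      intro a
      exact_mod_cast congrArg (fun n : ℕ => (n : ℝ)) (hsplit a)
    have hsum_n : ∑ _a ∈ NLs Ind, ((NLs Ind).card : ℝ)⁻¹ = 1 := by
      rw [Finset.sum_const, nsmul_eq_mul, mul_inv_cancel₀ (ne_of_gt hn_pos)]
    rcases lt_or_gt_of_ne ht1 with hlt | hgt
    · -- t < 1: each coefficient < n, so sum of inverses > 1
      have hterm : ∀ a ∈ NLs Ind, ((NLs Ind).card : ℝ)⁻¹ <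
          (t * ((nbr Ind a).card : ℝ) + ((par Ind a).card : ℝ))⁻¹ := by
        intro a haN
        have ha := (hmem_N a).mp haN
        have hc := hc_pos a ha
        have hd := hd_pos a ha
        have h2 := hdp a
        have hlt' : t * ((nbr Ind a).card : ℝ) + ((par Ind a).card : ℝ) <
            ((NLs Ind).card : ℝ) := by nlinarith
        exact (inv_strictAnti₀ hc hlt' : _)
      have hbig : (1:ℝ) < ∑ a ∈ NLs Ind,
          (t * ((nbr Ind a).card : ℝ) + ((par Ind a).card : ℝ))⁻¹ := by
        calc (1:ℝ) = ∑ _a ∈ NLs Ind, ((NLs Ind).card : ℝ)⁻¹ := hsum_n.symm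
          _ < _ := Finset.sum_lt_sum_of_nonempty hNne hterm
      linarith [hsum1]
    · -- t > 1: each coefficient > n, so sum of inverses < 1
      have hterm : ∀ a ∈ NLs Ind,
          (t * ((nbr Ind a).card : ℝ) + ((par Ind a).card : ℝ))⁻¹ <
          ((NLs Ind).card : ℝ)⁻¹ := by
        intro a haN
        have ha := (hmem_N a).mp haN
        have hd := hd_pos a ha
        have h2 := hdp a
        have hgt' : ((NLs Ind).card : ℝ) <
            t * ((nbr Ind a).card : ℝ) + ((par Ind a).card : ℝ) := by nlinarith
        exact (inv_strictAnti₀ hn_pos hgt' : _)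
      have hsmall : ∑ a ∈ NLs Ind,
          (t * ((nbr Ind a).card : ℝ) + ((par Ind a).card : ℝ))⁻¹ < 1 := by
        calc ∑ a ∈ NLs Ind,
            (t * ((nbr Ind a).card : ℝ) + ((par Ind a).card : ℝ))⁻¹
            < ∑ _a ∈ NLs Ind, ((NLs Ind).card : ℝ)⁻¹ :=
              Finset.sum_lt_sum_of_nonempty hNne hterm
          _ = 1 := hsum_n
      linarith [hsum1]
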